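/- Let X be a regular simplicial set and y an n-simplex of X. Suppose μ and ν are face operators with target [n] such that the union of their images is [n] and neither image is contained in the other. If the non-degenerate parts of y∘μ and y∘ν are equal, then y is degenerate and its non-degenerate part equals the common non-degenerate part of y∘μ and y∘ν. -/

import Mathlib

open CategoryTheory GrothendieckTopology Simplicial Opposite Limits

namespace SSet

/-- Naturality of the Yoneda bijection for simplicial sets. -/
lemma yonedaEquiv_symm_naturality' {m n : SimplexCategory} (f : m ⟶ n) (X : SSet)
    (y : X.obj (op n)) :
    SSet.stdSimplex.map f ≫ (yonedaEquiv (X := X) (n := n)).symm y =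
      (yonedaEquiv (X := X) (n := m)).symm (X.map f.op y) :=
  yonedaEquiv_symm_naturality_left f y

variable (X : SSet)

/-- A simplex is degenerate if it is the image of a simplex of strictly lower degree
under a simplicial operator. -/
def Degenerate {n : ℕ} (y : X _⦋n⦌) : Prop :=
  ∃ (m : ℕ) (σ : (⦋n⦌ : SimplexCategory) ⟶ ⦋m⦌) (z : X _⦋m⦌), m < n ∧ y = X.map σ.op z

/-- A simplex is non-degenerate if it is not degenerate. -/
def Nondegenerate {n : ℕ} (y : X _⦋n⦌) : Prop := ¬ X.Degenerate y

/-- The representing map `Δ[n] ⟶ X` of the `(n+1)`-st face `y ∘ δₙ₊₁` of an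
`(n+1)`-simplex `y` of `X`. -/
noncomputable def lastFaceMap {n : ℕ} (y : X _⦋n+1⦌) : Δ[n] ⟶ X :=
  (yonedaEquiv (X := X) (n := ⦋n⦌)).symm (X.map (SimplexCategory.δ (Fin.last (n+1))).op y)

/-- The canonical map `Δ[n+1] ⊔_{Δ[n]} Y' ⟶ X`, where `Y'` is the simplicial subset of `X`
generated by the last face of `y` (i.e. the image of the representing map of that face). -/
noncomputable def regularityMap {n : ℕ} (y : X _⦋n+1⦌) :
    pushout (C := SSet.{u_1}) (SSet.stdSimplex.map (SimplexCategory.δ (Fin.last (n+1))))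
      (Subfunctor.toRange (X.lastFaceMap y)) ⟶ X :=
  pushout.desc ((yonedaEquiv (X := X) (n := ⦋n+1⦌)).symm y) (Subfunctor.range (X.lastFaceMap y)).ι
    (by rw [yonedaEquiv_symm_naturality']; exact (Subfunctor.toRange_ι _).symm)

/-- A simplicial set is regular if, for each of its non-degenerate simplices `y`,
the canonical map from the pushout `Δ[n+1] ⊔_{Δ[n]} Y'` to `X` is degreewise injective. -/
def IsRegular : Prop :=
  ∀ (n : ℕ) (y : X _⦋n+1⦌), X.Nondegenerate y →
    ∀ (k : SimplexCategoryᵒᵖ), Function.Injective ((X.regularityMap y).app k)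

end SSet


open SimplexCategory

namespace DeflationAux

open SSet

/-! ### Monotone sections of surjective monotone maps -/

/-- The "max section" of a surjective monotone map between `Fin` types. -/
noncomputable def maxSec {a b : ℕ} (f : Fin (a+1) →o Fin (b+1)) (hf : Function.Surjective f) :
    Fin (b+1) →o Fin (a+1) where
  toFun w := (Finset.univ.filter fun i => f i = w).max' (by
    obtain ⟨i, hi⟩ := hf w
    exact ⟨i, by simp [hi]⟩)
  monotone' := by
    intro w w' hww
    by_contra hc
    push_neg at hc
    set s := (Finset.univ.filter fun i => f i = w).max' _ with hs
    set s' := (Finset.univ.filter fun i => f i = w').max' _ with hs'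
    have hmem : f s = w := by
      have := Finset.max'_mem (Finset.univ.filter fun i => f i = w) (by
        obtain ⟨i, hi⟩ := hf w; exact ⟨i, by simp [hi]⟩)
      simpa using this
    have hmem' : f s' = w' := by
      have := Finset.max'_mem (Finset.univ.filter fun i => f i = w') (by
        obtain ⟨i, hi⟩ := hf w'; exact ⟨i, by simp [hi]⟩)
      simpa using this
    have h1 : f s' ≤ f s := f.monotone hc.le
    have hww' : w = w' := le_antisymm hww (by rw [← hmem, ← hmem']; exact h1)
    subst hww'
    have : s ≤ s' := Finset.le_max' _ _ (by simp [hmem])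
    exact absurd this (not_le.2 hc)

lemma maxSec_apply {a b : ℕ} (f : Fin (a+1) →o Fin (b+1)) (hf : Function.Surjective f)
    (w : Fin (b+1)) : f (maxSec f hf w) = w := by
  have := Finset.max'_mem (Finset.univ.filter fun i => f i = w) (by
    obtain ⟨i, hi⟩ := hf w; exact ⟨i, by simp [hi]⟩)
  exact (Finset.mem_filter.1 this).2

lemma le_maxSec {a b : ℕ} (f : Fin (a+1) →o Fin (b+1)) (hf : Function.Surjective f)
    (i : Fin (a+1)) : i ≤ maxSec f hf (f i) :=
  Finset.le_max' _ _ (by simp)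

lemma maxSec_last {a b : ℕ} (f : Fin (a+1) →o Fin (b+1)) (hf : Function.Surjective f) :
    maxSec f hf (Fin.last b) = Fin.last a := by
  refine le_antisymm (Fin.le_last _) ?_
  have hlast : f (Fin.last a) = Fin.last b := by
    obtain ⟨i, hi⟩ := hf (Fin.last b)
    exact le_antisymm (Fin.le_last _) (hi ▸ f.monotone (Fin.le_last i))
  have := le_maxSec f hf (Fin.last a)
  rwa [hlast] at this

/-- The "min section" of a surjective monotone map between `Fin` types. -/
noncomputable def minSec {a b : ℕ} (f : Fin (a+1) →o Fin (b+1)) (hf : Function.Surjective f) :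
    Fin (b+1) →o Fin (a+1) where
  toFun w := (Finset.univ.filter fun i => f i = w).min' (by
    obtain ⟨i, hi⟩ := hf w
    exact ⟨i, by simp [hi]⟩)
  monotone' := by
    intro w w' hww
    by_contra hc
    push_neg at hc
    set s := (Finset.univ.filter fun i => f i = w).min' _ with hs
    set s' := (Finset.univ.filter fun i => f i = w').min' _ with hs'
    have hmem : f s = w := by
      have := Finset.min'_mem (Finset.univ.filter fun i => f i = w) (by
        obtain ⟨i, hi⟩ := hf w; exact ⟨i, by simp [hi]⟩)
      simpa using this
    have hmem' : f s' = w' := by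
      have := Finset.min'_mem (Finset.univ.filter fun i => f i = w') (by
        obtain ⟨i, hi⟩ := hf w'; exact ⟨i, by simp [hi]⟩)
      simpa using this
    have h1 : f s' ≤ f s := f.monotone hc.le
    have hww' : w = w' := le_antisymm hww (by rw [← hmem, ← hmem']; exact h1)
    subst hww'
    have : s' ≤ s := Finset.min'_le _ _ (by simp [hmem])
    exact absurd this (not_le.2 hc)

lemma minSec_apply {a b : ℕ} (f : Fin (a+1) →o Fin (b+1)) (hf : Function.Surjective f)
    (w : Fin (b+1)) : f (minSec f hf w) = w := by
  have := Finset.min'_mem (Finset.univ.filter fun i => f i = w) (by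
    obtain ⟨i, hi⟩ := hf w; exact ⟨i, by simp [hi]⟩)
  exact (Finset.mem_filter.1 this).2

lemma minSec_le {a b : ℕ} (f : Fin (a+1) →o Fin (b+1)) (hf : Function.Surjective f)
    (i : Fin (a+1)) : minSec f hf (f i) ≤ i :=
  Finset.min'_le _ _ (by simp)

lemma minSec_ne_maxSec {a b : ℕ} (f : Fin (a+1) →o Fin (b+1)) (hf : Function.Surjective f)
    (hinj : ¬ Function.Injective f) : minSec f hf ≠ maxSec f hf := by
  simp only [Function.not_injective_iff] at hinj
  obtain ⟨i, j, hij, hne⟩ := hinj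
  intro h
  rcases hne.lt_or_gt with hlt | hlt
  · have h1 : minSec f hf (f i) ≤ i := minSec_le f hf i
    have h2 : j ≤ maxSec f hf (f i) := hij ▸ le_maxSec f hf j
    have heq : minSec f hf (f i) = maxSec f hf (f i) :=
      congrFun (congrArg (DFunLike.coe) h) (f i)
    exact absurd ((heq ▸ h1).trans_lt (hlt.trans_le h2)) (lt_irrefl _)
  · have h1 : minSec f hf (f i) ≤ j := hij ▸ minSec_le f hf j
    have h2 : i ≤ maxSec f hf (f i) := le_maxSec f hf i
    have heq : minSec f hf (f i) = maxSec f hf (f i) :=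
      congrFun (congrArg (DFunLike.coe) h) (f i)
    exact absurd ((heq ▸ h1).trans_lt (hlt.trans_le h2)) (lt_irrefl _)

/-! ### Sections in the simplex category -/

/-- The max section as a morphism in the simplex category. -/
noncomputable def secMax {a b : ℕ} (e : (⦋a⦌ : SimplexCategory) ⟶ ⦋b⦌)
    (he : Function.Surjective e.toOrderHom) : (⦋b⦌ : SimplexCategory) ⟶ ⦋a⦌ :=
  SimplexCategory.mkHom (maxSec e.toOrderHom he)

@[simp]
lemma secMax_comp {a b : ℕ} (e : (⦋a⦌ : SimplexCategory) ⟶ ⦋b⦌)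
    (he : Function.Surjective e.toOrderHom) : secMax e he ≫ e = 𝟙 _ := by
  ext i : 3
  exact maxSec_apply e.toOrderHom he i

lemma secMax_last {a b : ℕ} (e : (⦋a⦌ : SimplexCategory) ⟶ ⦋b⦌)
    (he : Function.Surjective e.toOrderHom) :
    (secMax e he).toOrderHom (Fin.last b) = Fin.last a :=
  maxSec_last e.toOrderHom he

/-- The min section as a morphism in the simplex category. -/
noncomputable def secMin {a b : ℕ} (e : (⦋a⦌ : SimplexCategory) ⟶ ⦋b⦌)
    (he : Function.Surjective e.toOrderHom) : (⦋b⦌ : SimplexCategory) ⟶ ⦋a⦌ :=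
  SimplexCategory.mkHom (minSec e.toOrderHom he)

@[simp]
lemma secMin_comp {a b : ℕ} (e : (⦋a⦌ : SimplexCategory) ⟶ ⦋b⦌)
    (he : Function.Surjective e.toOrderHom) : secMin e he ≫ e = 𝟙 _ := by
  ext i : 3
  exact minSec_apply e.toOrderHom he i

lemma secMin_ne_secMax {a b : ℕ} (e : (⦋a⦌ : SimplexCategory) ⟶ ⦋b⦌)
    (he : Function.Surjective e.toOrderHom) (hinj : ¬ Function.Injective e.toOrderHom) :
    secMin e he ≠ secMax e he := by
  intro h
  exact minSec_ne_maxSec e.toOrderHom he hinj (congrArg SimplexCategory.Hom.toOrderHom h)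

/-! ### Basic functoriality helpers -/

lemma map_comp_apply' (X : SSet) {a b c : SimplexCategory} (f : a ⟶ b) (g : b ⟶ c)
    (y : X.obj (op c)) : X.map (f ≫ g).op y = X.map f.op (X.map g.op y) := by
  rw [op_comp, FunctorToTypes.map_comp_apply]

lemma map_id_apply' (X : SSet) {a : SimplexCategory} (y : X.obj (op a)) :
    X.map (𝟙 a).op y = y := by
  rw [op_id, FunctorToTypes.map_id_apply]

/-! ### Eilenberg–Zilber decomposition -/

/-- Epi-mono factorization in the simplex category. -/
lemma factor_epi_mono : ∀ (a : ℕ) {b : ℕ} (f : (⦋a⦌ : SimplexCategory) ⟶ ⦋b⦌),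
    ∃ (c : ℕ) (e : (⦋a⦌ : SimplexCategory) ⟶ ⦋c⦌) (i : (⦋c⦌ : SimplexCategory) ⟶ ⦋b⦌),
      c ≤ b ∧ Epi e ∧ Mono i ∧ f = e ≫ i := by
  intro a
  induction a with
  | zero =>
    intro b f
    have : Mono f := SimplexCategory.mono_iff_injective.2
      (fun x y _ => Subsingleton.elim (α := Fin 1) x y)
    exact ⟨0, 𝟙 _, f, Nat.zero_le _, inferInstance, this, (Category.id_comp f).symm⟩
  | succ a ih =>
    intro b f
    by_cases hinj : Function.Injective f.toOrderHom
    · have hm : Mono f := SimplexCategory.mono_iff_injective.2 hinj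
      exact ⟨a + 1, 𝟙 _, f, @SimplexCategory.le_of_mono _ _ _ hm, inferInstance, hm,
        (Category.id_comp f).symm⟩
    · obtain ⟨i, f', hf⟩ := SimplexCategory.eq_σ_comp_of_not_injective f hinj
      obtain ⟨c, e', i', hc, he', hi', hfac⟩ := ih f'
      exact ⟨c, SimplexCategory.σ i ≫ e', i', hc, epi_comp _ _, hi',
        by rw [hf, hfac, Category.assoc]⟩

/-- Eilenberg–Zilber: existence of the decomposition of a simplex into a degeneracy
operator applied to a non-degenerate simplex. -/
lemma exists_nondeg (X : SSet) : ∀ (n : ℕ) (y : X _⦋n⦌),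
    ∃ (p : ℕ) (e : (⦋n⦌ : SimplexCategory) ⟶ ⦋p⦌) (w : X _⦋p⦌),
      p ≤ n ∧ Epi e ∧ X.Nondegenerate w ∧ y = X.map e.op w := by
  intro n
  induction n using Nat.strong_induction_on with
  | _ n ih =>
    intro y
    by_cases hy : X.Nondegenerate y
    · exact ⟨n, 𝟙 _, y, le_refl _, inferInstance, hy, (map_id_apply' X y).symm⟩
    · have hy' : X.Degenerate y := not_not.1 hy
      obtain ⟨m, τ, z, hm, rfl⟩ := hy'
      obtain ⟨c, e, i, hcb, he, hi, hfac⟩ := factor_epi_mono n τ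
      obtain ⟨p, e₂, w, hp, he₂, hw, hz'⟩ := ih c (lt_of_le_of_lt hcb hm) (X.map i.op z)
      refine ⟨p, e ≫ e₂, w, le_of_lt (lt_of_le_of_lt (hp.trans hcb) hm), epi_comp _ _, hw, ?_⟩
      rw [hfac, map_comp_apply', hz', ← map_comp_apply']

/-- A simplicial operator producing a non-degenerate simplex is a monomorphism. -/
lemma mono_of_nondeg (X : SSet) {p q : ℕ} (f : (⦋p⦌ : SimplexCategory) ⟶ ⦋q⦌) (z : X _⦋q⦌)
    (h₁ : X.Nondegenerate (X.map f.op z)) : Mono f := by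
  rw [SimplexCategory.mono_iff_injective]
  by_contra hinj
  cases p with
  | zero => exact hinj (fun i j _ => Subsingleton.elim (α := Fin 1) i j)
  | succ p =>
    obtain ⟨i, f', hf⟩ := SimplexCategory.eq_σ_comp_of_not_injective f hinj
    exact h₁ ⟨p, SimplexCategory.σ i, X.map f'.op z, p.lt_succ_self, by rw [hf, map_comp_apply']⟩

/-- Eilenberg–Zilber: uniqueness of the non-degenerate part. -/
lemma nondeg_unique (X : SSet) {a p q : ℕ} (e₁ : (⦋a⦌ : SimplexCategory) ⟶ ⦋p⦌)
    (e₂ : (⦋a⦌ : SimplexCategory) ⟶ ⦋q⦌) (he₁ : Epi e₁) (he₂ : Epi e₂)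
    (z₁ : X _⦋p⦌) (z₂ : X _⦋q⦌) (h₁ : X.Nondegenerate z₁) (h₂ : X.Nondegenerate z₂)
    (h : X.map e₁.op z₁ = X.map e₂.op z₂) : p = q ∧ HEq z₁ z₂ := by
  have hs₁ := SimplexCategory.epi_iff_surjective.1 he₁
  have hs₂ := SimplexCategory.epi_iff_surjective.1 he₂
  have key₁ : z₁ = X.map (secMax e₁ hs₁ ≫ e₂).op z₂ := by
    rw [map_comp_apply', ← h, ← map_comp_apply', secMax_comp, map_id_apply']
  have key₂ : z₂ = X.map (secMax e₂ hs₂ ≫ e₁).op z₁ := by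
    rw [map_comp_apply', h, ← map_comp_apply', secMax_comp, map_id_apply']
  have m₁ : Mono (secMax e₁ hs₁ ≫ e₂) := mono_of_nondeg X _ z₂ (key₁ ▸ h₁)
  have m₂ : Mono (secMax e₂ hs₂ ≫ e₁) := mono_of_nondeg X _ z₁ (key₂ ▸ h₂)
  have hpq : p = q := le_antisymm (@SimplexCategory.le_of_mono _ _ _ m₁) (@SimplexCategory.le_of_mono _ _ _ m₂)
  subst hpq
  refine ⟨rfl, heq_of_eq ?_⟩
  haveI := m₁
  rw [key₁, SimplexCategory.eq_id_of_mono (secMax e₁ hs₁ ≫ e₂), map_id_apply']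

/-! ### The key consequence of regularity -/

/-- In a regular simplicial set, two simplicial operators that yield the same simplex
when applied to a non-degenerate simplex must be equal provided one of them hits the
top vertex. -/
lemma regular_apply_injective (X : SSet) (hX : X.IsRegular) {n : ℕ} (y : X _⦋n+1⦌)
    (hy : X.Nondegenerate y) {j : ℕ} (φ ψ : (⦋j⦌ : SimplexCategory) ⟶ ⦋n+1⦌)
    (h : X.map φ.op y = X.map ψ.op y)
    (hφ : φ.toOrderHom (Fin.last j) = Fin.last (n+1)) : φ = ψ := by
  classical
  set f := SSet.stdSimplex.map (SimplexCategory.δ (Fin.last (n+1))) with hfdef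
  set g := Subfunctor.toRange (X.lastFaceMap y) with hgdef
  have inj := hX n y hy (op ⦋j⦌)
  have happ : ∀ (x : (⦋j⦌ : SimplexCategory) ⟶ ⦋n+1⦌),
      (X.regularityMap y).app (op ⦋j⦌) ((pushout.inl f g).app (op ⦋j⦌) (ULift.up x))
        = X.map x.op y := by
    intro x
    have hcomp : pushout.inl f g ≫ X.regularityMap y = (yonedaEquiv (X := X) (n := ⦋n+1⦌)).symm y :=
      pushout.inl_desc _ _ _
    exact ConcreteCategory.congr_hom (congr_app hcomp (op ⦋j⦌)) (ULift.up x : Δ[n+1] _⦋j⦌)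
  have heq : (pushout.inl f g).app (op ⦋j⦌) (ULift.up φ)
      = (pushout.inl f g).app (op ⦋j⦌) (ULift.up ψ) := by
    apply inj
    rw [happ, happ, h]
  have hP := isColimitOfHasPushoutOfPreservesColimit
    ((evaluation SimplexCategoryᵒᵖ (Type _)).obj (op ⦋j⦌)) f g
  let u : Δ[n+1].obj (op ⦋j⦌) → Option (Δ[n+1].obj (op ⦋j⦌)) := fun x =>
    if x.down.toOrderHom (Fin.last j) = Fin.last (n+1) then some x else none
  let v : ((Subfunctor.range (X.lastFaceMap y)).toFunctor).obj (op ⦋j⦌)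
      → Option (Δ[n+1].obj (op ⦋j⦌)) := fun _ => none
  have comm : ((evaluation SimplexCategoryᵒᵖ (Type _)).obj (op ⦋j⦌)).map f ≫ TypeCat.ofHom u
      = ((evaluation SimplexCategoryᵒᵖ (Type _)).obj (op ⦋j⦌)).map g ≫ TypeCat.ofHom v := by
    refine ConcreteCategory.hom_ext _ _ (fun x => ?_)
    show (if (f.app (op ⦋j⦌) x).down.toOrderHom (Fin.last j) = Fin.last (n+1)
        then some (f.app (op ⦋j⦌) x) else none) = none
    rw [if_neg]
    show ¬ ((SimplexCategory.δ (Fin.last (n+1))).toOrderHom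
      (x.down.toOrderHom (Fin.last j)) = Fin.last (n+1))
    show ¬ (Fin.succAbove (Fin.last (n+1)) (x.down.toOrderHom (Fin.last j)) = Fin.last (n+1))
    rw [Fin.succAbove_last]
    exact (Fin.castSucc_lt_last _).ne
  have hfac := PushoutCocone.IsColimit.inl_desc hP (TypeCat.ofHom u) (TypeCat.ofHom v) comm
  have e1 := ConcreteCategory.congr_hom hfac (ULift.up φ : Δ[n+1] _⦋j⦌)
  have e2 := ConcreteCategory.congr_hom hfac (ULift.up ψ : Δ[n+1] _⦋j⦌)
  have heq' : ((evaluation SimplexCategoryᵒᵖ (Type _)).obj (op ⦋j⦌)).map (pushout.inl f g)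
      (ULift.up φ) = ((evaluation SimplexCategoryᵒᵖ (Type _)).obj (op ⦋j⦌)).map
      (pushout.inl f g) (ULift.up ψ) := heq
  have h1 : u (ULift.up φ) = u (ULift.up ψ) := by
    have := congrArg (ConcreteCategory.hom (PushoutCocone.IsColimit.desc hP _ _ comm)) heq'
    exact e1.symm.trans (this.trans e2)
  have h2 : (some (ULift.up φ) : Option (Δ[n+1].obj (op ⦋j⦌))) = u (ULift.up ψ) := by
    rw [← h1]
    show (some (ULift.up φ) : Option (Δ[n+1].obj (op ⦋j⦌)))
      = (if φ.toOrderHom (Fin.last j) = Fin.last (n+1) then some (ULift.up φ) else none)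
    exact (if_pos hφ).symm
  by_cases hψ : ψ.toOrderHom (Fin.last j) = Fin.last (n+1)
  · have hval : u (ULift.up ψ) = some (ULift.up ψ) := by
      show (if ψ.toOrderHom (Fin.last j) = Fin.last (n+1) then some (ULift.up ψ) else none)
        = some (ULift.up ψ)
      rw [if_pos hψ]
    rw [hval] at h2
    exact congrArg ULift.down (Option.some_injective _ h2)
  · have hval : u (ULift.up ψ) = none := by
      show (if ψ.toOrderHom (Fin.last j) = Fin.last (n+1) then some (ULift.up ψ) else none)
        = none
      rw [if_neg hψ]
    rw [hval] at h2
    exact absurd h2 (Option.some_ne_none _)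

/-! ### The non-degenerate case leads to a contradiction -/

lemma nondeg_contradiction (X : SSet) (hX : X.IsRegular) {n : ℕ} (y : X _⦋n+1⦌)
    (hy : X.Nondegenerate y) {k l m : ℕ}
    (μ : (⦋k⦌ : SimplexCategory) ⟶ ⦋n+1⦌) (ν : (⦋l⦌ : SimplexCategory) ⟶ ⦋n+1⦌)
    (hμ : Mono μ) (hν : Mono ν)
    (hne : Set.range μ.toOrderHom ≠ Set.range ν.toOrderHom)
    (hlast : ν.toOrderHom (Fin.last l) = Fin.last (n+1))
    (z : X _⦋m⦌) (α : (⦋k⦌ : SimplexCategory) ⟶ ⦋m⦌) (β : (⦋l⦌ : SimplexCategory) ⟶ ⦋m⦌)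
    (hα : Epi α) (hβ : Epi β)
    (h₁ : X.map μ.op y = X.map α.op z) (h₂ : X.map ν.op y = X.map β.op z) : False := by
  have hαs : Function.Surjective α.toOrderHom := SimplexCategory.epi_iff_surjective.1 hα
  have hβs : Function.Surjective β.toOrderHom := SimplexCategory.epi_iff_surjective.1 hβ
  set ψ := secMax β hβs ≫ ν with hψ
  have hψtop : ψ.toOrderHom (Fin.last m) = Fin.last (n+1) := by
    rw [hψ]
    show ν.toOrderHom ((secMax β hβs).toOrderHom (Fin.last m)) = _
    rw [secMax_last, hlast]
  have hsec : ∀ (t : (⦋m⦌ : SimplexCategory) ⟶ ⦋l⦌), t ≫ β = 𝟙 _ →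
      X.map (t ≫ ν).op y = z := by
    intro t ht
    rw [map_comp_apply', h₂, ← map_comp_apply', ht, map_id_apply']
  have hsecα : ∀ (s : (⦋m⦌ : SimplexCategory) ⟶ ⦋k⦌), s ≫ α = 𝟙 _ →
      X.map (s ≫ μ).op y = z := by
    intro s hs
    rw [map_comp_apply', h₁, ← map_comp_apply', hs, map_id_apply']
  have hψz : X.map ψ.op y = z := hsec _ (secMax_comp β hβs)
  have hkm : k = m := by
    by_contra hkm
    have hk : m ≤ k := @SimplexCategory.le_of_epi _ _ _ hα
    have hαninj : ¬ Function.Injective α.toOrderHom := by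
      intro hinj
      exact hkm (le_antisymm
        (@SimplexCategory.le_of_mono _ _ _ (SimplexCategory.mono_iff_injective.2 hinj)) hk)
    have e1 : ψ = secMin α hαs ≫ μ := regular_apply_injective X hX y hy _ _
      (by rw [hψz, hsecα _ (secMin_comp α hαs)]) hψtop
    have e2 : ψ = secMax α hαs ≫ μ := regular_apply_injective X hX y hy _ _
      (by rw [hψz, hsecα _ (secMax_comp α hαs)]) hψtop
    have : secMin α hαs = secMax α hαs := (cancel_mono μ).1 (e1.symm.trans e2)
    exact secMin_ne_secMax α hαs hαninj this
  have hlm : l = m := by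
    by_contra hlm
    have hl : m ≤ l := @SimplexCategory.le_of_epi _ _ _ hβ
    have hβninj : ¬ Function.Injective β.toOrderHom := by
      intro hinj
      exact hlm (le_antisymm
        (@SimplexCategory.le_of_mono _ _ _ (SimplexCategory.mono_iff_injective.2 hinj)) hl)
    have e1 : ψ = secMin β hβs ≫ ν := regular_apply_injective X hX y hy _ _
      (by rw [hψz, hsec _ (secMin_comp β hβs)]) hψtop
    have : secMax β hβs = secMin β hβs := (cancel_mono ν).1 (hψ.symm.trans e1)
    exact secMin_ne_secMax β hβs hβninj this.symm
  subst hkm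
  subst hlm
  haveI := hα
  haveI := hβ
  have hα1 : α = 𝟙 _ := SimplexCategory.eq_id_of_epi α
  have hβ1 : β = 𝟙 _ := SimplexCategory.eq_id_of_epi β
  have hz₁ : X.map μ.op y = z := by rw [h₁, hα1, map_id_apply']
  have hz₂ : X.map ν.op y = z := by rw [h₂, hβ1, map_id_apply']
  have : ν = μ := regular_apply_injective X hX y hy ν μ (by rw [hz₁, hz₂]) hlast
  exact hne (by rw [this])

end DeflationAux

open DeflationAux

/-- Let `X` be a regular simplicial set and `y` an `n`-simplex. Suppose `μ`, `ν` are face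
operators with target `[n]` whose images cover `[n]`, neither image being contained in the
other. If `y ∘ μ` and `y ∘ ν` have the same non-degenerate part `z`, then `y` is
degenerate with non-degenerate part `z`. -/
theorem deflation_theorem
    (X : SSet) (hX : X.IsRegular) {n : ℕ} (y : X _⦋n⦌)
    {k l : ℕ} (μ : (⦋k⦌ : SimplexCategory) ⟶ ⦋n⦌) (ν : (⦋l⦌ : SimplexCategory) ⟶ ⦋n⦌)
    (hμ : Mono μ) (hν : Mono ν)
    (hunion : Set.range μ.toOrderHom ∪ Set.range ν.toOrderHom = Set.univ)
    (hμν : ¬ Set.range μ.toOrderHom ⊆ Set.range ν.toOrderHom)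
    (hνμ : ¬ Set.range ν.toOrderHom ⊆ Set.range μ.toOrderHom)
    (m : ℕ) (z : X _⦋m⦌) (α : (⦋k⦌ : SimplexCategory) ⟶ ⦋m⦌) (β : (⦋l⦌ : SimplexCategory) ⟶ ⦋m⦌)
    (hα : Epi α) (hβ : Epi β) (hz : X.Nondegenerate z)
    (h₁ : X.map μ.op y = X.map α.op z) (h₂ : X.map ν.op y = X.map β.op z) :
    m < n ∧ ∃ γ : (⦋n⦌ : SimplexCategory) ⟶ ⦋m⦌, Epi γ ∧ y = X.map γ.op z := by
  induction n using Nat.strong_induction_on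
    generalizing k l m z α β hα hβ hz with
  | _ n ih =>
  cases n with
  | zero =>
    exfalso
    apply hμν
    intro x hx
    obtain ⟨w, hw⟩ : ∃ w, w ∈ Set.range ν.toOrderHom := ⟨ν.toOrderHom 0, ⟨0, rfl⟩⟩
    have hxw : x = w := Subsingleton.elim (α := Fin 1) x w
    rw [hxw]; exact hw
  | succ n =>
    -- Step 1: `y` is degenerate.
    have hdeg : X.Degenerate y := by
      by_contra hy
      have hy' : X.Nondegenerate y := hy
      have hmem : Fin.last (n+1) ∈ Set.range μ.toOrderHom ∪ Set.range ν.toOrderHom := by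
        rw [hunion]; trivial
      have hne : Set.range μ.toOrderHom ≠ Set.range ν.toOrderHom :=
        fun h => hμν (h ▸ subset_rfl)
      rcases hmem with ⟨i, hi⟩ | ⟨i, hi⟩
      · exact nondeg_contradiction X hX y hy' ν μ hν hμ hne.symm
          (le_antisymm (Fin.le_last _) (hi ▸ μ.toOrderHom.monotone (Fin.le_last i)))
          z β α hβ hα h₂ h₁
      · exact nondeg_contradiction X hX y hy' μ ν hμ hν hne
          (le_antisymm (Fin.le_last _) (hi ▸ ν.toOrderHom.monotone (Fin.le_last i)))
          z α β hα hβ h₁ h₂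
    -- Step 2: Eilenberg–Zilber decomposition of `y`.
    obtain ⟨p, e, w, hp, he, hw, hyw⟩ := exists_nondeg X (n+1) y
    have hpn : p < n + 1 := by
      rcases lt_or_eq_of_le hp with hlt | heq'
      · exact hlt
      · exfalso
        subst heq'
        haveI := he
        rw [SimplexCategory.eq_id_of_epi e, map_id_apply'] at hyw
        exact hw (hyw ▸ hdeg)
    -- Step 3: factor the compressed face operators.
    obtain ⟨k₁, α₁, μ₁, hk₁, hα₁, hμ₁, hfacμ⟩ := factor_epi_mono k (μ ≫ e)
    obtain ⟨l₁, β₁, ν₁, hl₁, hβ₁, hν₁, hfacν⟩ := factor_epi_mono l (ν ≫ e)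
    -- Step 4: identify the non-degenerate parts of the compressed faces with `z`.
    obtain ⟨m₁, e₁, w₁, hm₁, he₁, hw₁, hwμ⟩ := exists_nondeg X k₁ (X.map μ₁.op w)
    have hchainμ : X.map α.op z = X.map (α₁ ≫ e₁).op w₁ := by
      rw [← h₁, hyw, ← map_comp_apply', hfacμ, map_comp_apply', hwμ, ← map_comp_apply']
    obtain ⟨hmm₁, hzw₁⟩ := nondeg_unique X α (α₁ ≫ e₁) hα (epi_comp _ _) z w₁ hz hw₁ hchainμ
    subst hmm₁
    have hzw : w₁ = z := (eq_of_heq hzw₁).symm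
    rw [hzw] at hwμ
    obtain ⟨m₂, e₂, w₂, hm₂, he₂, hw₂, hwν⟩ := exists_nondeg X l₁ (X.map ν₁.op w)
    have hchainν : X.map β.op z = X.map (β₁ ≫ e₂).op w₂ := by
      rw [← h₂, hyw, ← map_comp_apply', hfacν, map_comp_apply', hwν, ← map_comp_apply']
    obtain ⟨hmm₂, hzw₂⟩ := nondeg_unique X β (β₁ ≫ e₂) hβ (epi_comp _ _) z w₂ hz hw₂ hchainν
    subst hmm₂
    have hzw' : w₂ = z := (eq_of_heq hzw₂).symm
    rw [hzw'] at hwν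
    -- Step 5: ranges of the compressed face operators.
    have hes : Function.Surjective e.toOrderHom := SimplexCategory.epi_iff_surjective.1 he
    have hrμ : Set.range μ₁.toOrderHom = e.toOrderHom '' Set.range μ.toOrderHom := by
      have hh1 : Set.range (μ ≫ e).toOrderHom = e.toOrderHom '' Set.range μ.toOrderHom := by
        rw [SimplexCategory.comp_toOrderHom, OrderHom.comp_coe, Set.range_comp]
      have hh2 : Set.range (α₁ ≫ μ₁).toOrderHom = Set.range μ₁.toOrderHom := by
        rw [SimplexCategory.comp_toOrderHom, OrderHom.comp_coe]
        exact Function.Surjective.range_comp (SimplexCategory.epi_iff_surjective.1 hα₁) _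
      rw [← hh2, ← hfacμ, hh1]
    have hrν : Set.range ν₁.toOrderHom = e.toOrderHom '' Set.range ν.toOrderHom := by
      have hh1 : Set.range (ν ≫ e).toOrderHom = e.toOrderHom '' Set.range ν.toOrderHom := by
        rw [SimplexCategory.comp_toOrderHom, OrderHom.comp_coe, Set.range_comp]
      have hh2 : Set.range (β₁ ≫ ν₁).toOrderHom = Set.range ν₁.toOrderHom := by
        rw [SimplexCategory.comp_toOrderHom, OrderHom.comp_coe]
        exact Function.Surjective.range_comp (SimplexCategory.epi_iff_surjective.1 hβ₁) _
      rw [← hh2, ← hfacν, hh1]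
    have hru : Set.range μ₁.toOrderHom ∪ Set.range ν₁.toOrderHom = Set.univ := by
      rw [hrμ, hrν, ← Set.image_union, hunion, Set.image_univ, Set.range_eq_univ]
      exact hes
    -- Step 6: case analysis.
    by_cases hsub₁ : Set.range μ₁.toOrderHom ⊆ Set.range ν₁.toOrderHom
    · -- `ν₁` is surjective, hence the identity, and `w = z`.
      have hν₁univ : Set.range ν₁.toOrderHom = Set.univ := by
        rw [← Set.union_eq_self_of_subset_left hsub₁]
        exact hru
      have hν₁epi : Epi ν₁ :=
        SimplexCategory.epi_iff_surjective.2 (Set.range_eq_univ.1 hν₁univ)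
      have hl₁p : p = l₁ :=
        le_antisymm (@SimplexCategory.le_of_epi _ _ _ hν₁epi) (@SimplexCategory.le_of_mono _ _ _ hν₁)
      subst hl₁p
      haveI := hν₁
      rw [SimplexCategory.eq_id_of_mono ν₁, map_id_apply'] at hwν
      have hmp : m = p := by
        rcases lt_or_eq_of_le (@SimplexCategory.le_of_epi _ _ _ he₂) with hlt | heq'
        · exact absurd ⟨m, e₂, z, hlt, hwν⟩ hw
        · exact heq'
      subst hmp
      haveI := he₂
      rw [SimplexCategory.eq_id_of_epi e₂, map_id_apply'] at hwν
      exact ⟨hpn, e, he, by rw [hyw, hwν]⟩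
    · by_cases hsub₂ : Set.range ν₁.toOrderHom ⊆ Set.range μ₁.toOrderHom
      · -- `μ₁` is surjective, hence the identity, and `w = z`.
        have hμ₁univ : Set.range μ₁.toOrderHom = Set.univ := by
          rw [← Set.union_eq_self_of_subset_right hsub₂]
          exact hru
        have hμ₁epi : Epi μ₁ :=
          SimplexCategory.epi_iff_surjective.2 (Set.range_eq_univ.1 hμ₁univ)
        have hk₁p : p = k₁ :=
          le_antisymm (@SimplexCategory.le_of_epi _ _ _ hμ₁epi) (@SimplexCategory.le_of_mono _ _ _ hμ₁)
        subst hk₁p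
        haveI := hμ₁
        rw [SimplexCategory.eq_id_of_mono μ₁, map_id_apply'] at hwμ
        have hmp : m = p := by
          rcases lt_or_eq_of_le (@SimplexCategory.le_of_epi _ _ _ he₁) with hlt | heq'
          · exact absurd ⟨m, e₁, z, hlt, hwμ⟩ hw
          · exact heq'
        subst hmp
        haveI := he₁
        rw [SimplexCategory.eq_id_of_epi e₁, map_id_apply'] at hwμ
        exact ⟨hpn, e, he, by rw [hyw, hwμ]⟩
      · -- Neither range contained in the other: the inductive hypothesis applies to `w`,
        -- contradicting its non-degeneracy.
        exfalso
        obtain ⟨hmp, γ, hγ, hwz⟩ := ih p hpn w μ₁ ν₁ hμ₁ hν₁ hru hsub₁ hsub₂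
          m z e₁ e₂ he₁ he₂ hz hwμ hwν
        exact hw ⟨m, γ, z, hmp, hwz⟩
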